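/- For all r₁, r₂ > 0 and every integer m ≥ 1, Q_{2m−1}(r₁,r₂) > 0. In particular, ψ₀(z) + γ < 0 for every z ∈ (0,1), so that μ₁ > 0 and μ₂ > 0. -/

import Mathlib

open Real

noncomputable section

/-- The digamma value `ψ₀(z) = −γ + ∑_{k≥0} (z−1)/((k+1)(k+z))`. -/
def digammaVal (z : ℝ) : ℝ :=
  -Real.eulerMascheroniConstant + ∑' k : ℕ, (z - 1) / ((k + 1) * (k + z))

/-- The polygamma value `ψ_k(z) = (−1)^{k+1} k! ∑_{m≥0} (m+z)^{−(k+1)}` (for `k ≥ 1`). -/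
def polygammaVal (k : ℕ) (z : ℝ) : ℝ :=
  (-1) ^ (k + 1) * (k.factorial : ℝ) * ∑' m : ℕ, 1 / ((m : ℝ) + z) ^ (k + 1)

/-- The Riemann zeta value `ζ(s) = ∑_{n≥1} n^{−s}` (for `s ≥ 2`). -/
def zetaVal (s : ℕ) : ℝ := ∑' n : ℕ, 1 / ((n : ℝ) + 1) ^ s

def rTilde (r₁ r₂ : ℝ) : ℝ := r₁ * r₂ / (r₁ + r₂)

/-- `μ_j` for `j = 1, 2`. -/
def muConst (r₁ r₂ : ℝ) (j : ℕ) : ℝ :=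
  (digammaVal ((if j = 1 then r₁ else r₂) / (r₁ + r₂)) + Real.eulerMascheroniConstant) /
    (digammaVal (r₁ / (r₁ + r₂)) + digammaVal (r₂ / (r₁ + r₂)) +
      2 * Real.eulerMascheroniConstant)

/-- The coefficient `Q_k(r₁,r₂)` (for `k ≥ 1`). -/
def Q (k : ℕ) (r₁ r₂ : ℝ) : ℝ :=
  4 * Real.pi * rTilde r₁ r₂ ^ (k + 1) *
    ((muConst r₁ r₂ 1 + (-1) ^ (k + 1) * muConst r₁ r₂ 2) * zetaVal (k + 1) +
      (muConst r₁ r₂ 1 * polygammaVal k (r₂ / (r₁ + r₂)) +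
        (-1) ^ (k + 1) * muConst r₁ r₂ 2 * polygammaVal k (r₁ / (r₁ + r₂))) /
      (k.factorial : ℝ))

lemma aux_summable (z : ℝ) (hz : 0 < z) (s : ℕ) (hs : 2 ≤ s) :
    Summable (fun m : ℕ => 1 / ((m : ℝ) + z) ^ s) := by
  set c := min z 1 with hc
  have hc0 : 0 < c := lt_min hz one_pos
  have hc1 : c ≤ 1 := min_le_right _ _
  have hcz : c ≤ z := min_le_left _ _
  have hsum2 : Summable (fun m : ℕ => c⁻¹ ^ s * (1 / ((m : ℝ) + 1) ^ 2)) := by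
    apply Summable.mul_left
    have := (summable_nat_add_iff 1).mpr (summable_one_div_nat_pow.mpr (le_refl 2))
    simpa using this
  apply Summable.of_nonneg_of_le (fun m => by positivity) _ hsum2
  intro m
  have hm : (0:ℝ) ≤ m := Nat.cast_nonneg m
  have h1 : c * ((m : ℝ) + 1) ≤ (m : ℝ) + z := by nlinarith
  have hpos : (0:ℝ) < (m:ℝ) + z := by linarith
  calc 1 / ((m : ℝ) + z) ^ s ≤ 1 / (c * ((m:ℝ)+1)) ^ s := by
        apply one_div_le_one_div_of_le (by positivity)
        exact pow_le_pow_left₀ (by positivity) h1 s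
      _ = c⁻¹ ^ s * (1 / ((m:ℝ)+1) ^ s) := by
        rw [mul_pow]; field_simp; rw [← mul_pow, mul_one_div_cancel hc0.ne', one_pow]
      _ ≤ c⁻¹ ^ s * (1 / ((m:ℝ)+1) ^ 2) := by
        apply mul_le_mul_of_nonneg_left _ (by positivity)
        apply one_div_le_one_div_of_le (by positivity)
        exact pow_le_pow_right₀ (by linarith) hs

lemma digamma_summable (z : ℝ) (hz : 0 < z) (hz1 : z < 1) :
    Summable (fun k : ℕ => 1 / (((k:ℝ) + 1) * ((k:ℝ) + z))) := by
  have hsum2 : Summable (fun m : ℕ => z⁻¹ * (1 / ((m : ℝ) + 1) ^ 2)) := by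
    apply Summable.mul_left
    have := (summable_nat_add_iff 1).mpr (summable_one_div_nat_pow.mpr (le_refl 2))
    simpa using this
  apply Summable.of_nonneg_of_le (fun m => by positivity) _ hsum2
  intro k
  have hk : (0:ℝ) ≤ k := Nat.cast_nonneg k
  have h1 : z * (((k:ℝ)+1) * ((k:ℝ)+1)) ≤ ((k:ℝ)+1) * ((k:ℝ)+z) := by
    nlinarith [mul_nonneg (mul_nonneg (by linarith : (0:ℝ) ≤ 1 - z) hk) (by linarith : (0:ℝ) ≤ (k:ℝ) + 1)]
  have hpos : (0:ℝ) < ((k:ℝ)+1) * ((k:ℝ)+z) := by positivity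
  rw [div_le_iff₀ hpos]
  have : z⁻¹ * (1 / ((k:ℝ)+1) ^ 2) * (z * (((k:ℝ)+1) * ((k:ℝ)+1))) = 1 := by
    field_simp
  calc (1:ℝ) = z⁻¹ * (1 / ((k:ℝ)+1) ^ 2) * (z * (((k:ℝ)+1) * ((k:ℝ)+1))) := this.symm
    _ ≤ z⁻¹ * (1 / ((k:ℝ)+1) ^ 2) * (((k:ℝ)+1) * ((k:ℝ)+z)) := by
        apply mul_le_mul_of_nonneg_left h1 (by positivity)

lemma digamma_neg (z : ℝ) (hz : z ∈ Set.Ioo (0:ℝ) 1) :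
    digammaVal z + Real.eulerMascheroniConstant < 0 := by
  obtain ⟨hz0, hz1⟩ := hz
  have : digammaVal z + Real.eulerMascheroniConstant
      = ∑' k : ℕ, (z - 1) / (((k:ℝ) + 1) * ((k:ℝ) + z)) := by
    unfold digammaVal; ring
  rw [this]
  have heq : ∀ k : ℕ, (z - 1) / (((k:ℝ) + 1) * ((k:ℝ) + z))
      = (z - 1) * (1 / (((k:ℝ) + 1) * ((k:ℝ) + z))) := by
    intro k; ring
  rw [tsum_congr heq, tsum_mul_left]
  have hpos : 0 < ∑' k : ℕ, 1 / (((k:ℝ) + 1) * ((k:ℝ) + z)) := by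
    apply Summable.tsum_pos (digamma_summable z hz0 hz1) (fun k => by positivity) 0
    norm_num [hz0]
  have : z - 1 < 0 := by linarith
  exact mul_neg_of_neg_of_pos this hpos

theorem stmt9 (r₁ r₂ : ℝ) (hr₁ : 0 < r₁) (hr₂ : 0 < r₂) :
    (∀ m : ℕ, 1 ≤ m → 0 < Q (2 * m - 1) r₁ r₂) ∧
    (∀ z ∈ Set.Ioo (0:ℝ) 1, digammaVal z + Real.eulerMascheroniConstant < 0) ∧
    0 < muConst r₁ r₂ 1 ∧ 0 < muConst r₁ r₂ 2 := by
  have hsum : 0 < r₁ + r₂ := by linarith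
  have ha : r₁ / (r₁ + r₂) ∈ Set.Ioo (0:ℝ) 1 :=
    ⟨div_pos hr₁ hsum, (div_lt_one hsum).mpr (by linarith)⟩
  have hb : r₂ / (r₁ + r₂) ∈ Set.Ioo (0:ℝ) 1 :=
    ⟨div_pos hr₂ hsum, (div_lt_one hsum).mpr (by linarith)⟩
  have hna := digamma_neg _ ha
  have hnb := digamma_neg _ hb
  have hden : digammaVal (r₁ / (r₁ + r₂)) + digammaVal (r₂ / (r₁ + r₂)) +
      2 * Real.eulerMascheroniConstant < 0 := by linarith
  have hmu1 : 0 < muConst r₁ r₂ 1 := by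
    unfold muConst; simp only [if_pos rfl]
    exact div_pos_of_neg_of_neg hna hden
  have hmu2 : 0 < muConst r₁ r₂ 2 := by
    unfold muConst; norm_num
    exact div_pos_of_neg_of_neg hnb hden
  refine ⟨?_, fun z hz => digamma_neg z hz, hmu1, hmu2⟩
  intro m hm
  set k := 2 * m - 1 with hk
  have hk1 : k + 1 = 2 * m := by omega
  have hsign : ((-1:ℝ)) ^ (k + 1) = 1 := by
    rw [hk1, pow_mul]; norm_num
  have hzeta : 0 < zetaVal (k + 1) := by
    unfold zetaVal
    apply Summable.tsum_pos _ (fun n => by positivity) 0 (by norm_num)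
    have := aux_summable 1 one_pos (k+1) (by omega)
    simpa using this
  have hpg : ∀ z : ℝ, 0 < z → 0 ≤ polygammaVal k z := by
    intro z hz
    unfold polygammaVal
    rw [hsign, one_mul]
    apply mul_nonneg (by positivity)
    exact tsum_nonneg (fun n => by positivity)
  have hrt : 0 < rTilde r₁ r₂ := by
    unfold rTilde; positivity
  unfold Q
  rw [hsign]
  have h2 : 0 < (muConst r₁ r₂ 1 + 1 * muConst r₁ r₂ 2) * zetaVal (k + 1) := by
    apply mul_pos (by linarith) hzeta
  have h3 : 0 ≤ (muConst r₁ r₂ 1 * polygammaVal k (r₂ / (r₁ + r₂)) +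
        1 * muConst r₁ r₂ 2 * polygammaVal k (r₁ / (r₁ + r₂))) / (k.factorial : ℝ) := by
    apply div_nonneg _ (by positivity)
    have := hpg _ hb.1
    have := hpg _ ha.1
    nlinarith
  have hpi : (0:ℝ) < Real.pi := Real.pi_pos
  have : 0 < 4 * Real.pi * rTilde r₁ r₂ ^ (k + 1) := by positivity
  nlinarith

end
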